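/- arXiv:2203.12520 — 5 statements merged into one kernel-verified Lean document; each statement's English description precedes it below -/
import Mathlib

section
/- Let n ≥ 1 and fix x ∈ ℝⁿ. Let F : ℝⁿ → ℝⁿ and ψ : ℝⁿ → ℝ both be differentiable at x. Let y : ℝ → ℝⁿ satisfy y(0) = x and have derivative −F(x) at t = 0 (y(t) represents the backward flow s(−t,x)), and let J : ℝ → L(ℝⁿ, ℝⁿ) be a map into continuous linear endomorphisms of ℝⁿ with J(0) = id that is differentiable at t = 0 with derivative −DF(x) (J(t) represents the Jacobian D_x s(−t,x), which satisfies the variational equation of the flow). Then the function t ↦ ψ(y(t))·det(J(t)) has derivative at t = 0 equal to −trace(D(ψ·F)(x)), where ψ·F : ℝⁿ → ℝⁿ is the vector field z ↦ ψ(z)·F(z) and D denotes the Fréchet derivative. That is, the infinitesimal generator of the Perron–Frobenius semigroup [P_t ψ](x) = ψ(s(−t,x))·det(D_x s(−t,x)) is P_F ψ = −∇·(Fψ). -/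
open Finset

lemma det_path_hasDerivAt {n : ℕ} (M : ℝ → Matrix (Fin n) (Fin n) ℝ)
    (A : Matrix (Fin n) (Fin n) ℝ) (hM0 : M 0 = 1)
    (hM : ∀ i j, HasDerivAt (fun t => M t i j) (A i j) 0) :
    HasDerivAt (fun t => (M t).det) A.trace 0 := by
  have h : ∀ σ : Equiv.Perm (Fin n),
      HasDerivAt (fun t => ∏ i, M t (σ i) i)
        (∑ i, (∏ j ∈ Finset.univ.erase i, M 0 (σ j) j) • A (σ i) i) 0 :=
    fun σ => HasDerivAt.fun_finsetProd (fun i _ => hM (σ i) i)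
  have key : HasDerivAt
      (fun t => ∑ σ : Equiv.Perm (Fin n),
        (((Equiv.Perm.sign σ : ℤ) : ℝ)) * ∏ i, M t (σ i) i)
      (∑ σ : Equiv.Perm (Fin n),
        (((Equiv.Perm.sign σ : ℤ) : ℝ)) *
          ∑ i, (∏ j ∈ Finset.univ.erase i, M 0 (σ j) j) • A (σ i) i) 0 :=
    HasDerivAt.fun_sum (fun σ _ => (h σ).const_mul _)
  have hfun : (fun t => (M t).det) =
      (fun t => ∑ σ : Equiv.Perm (Fin n),
        (((Equiv.Perm.sign σ : ℤ) : ℝ)) * ∏ i, M t (σ i) i) := by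
    funext t
    rw [Matrix.det_apply']
  rw [hfun]
  convert key using 1
  rw [Finset.sum_eq_single (1 : Equiv.Perm (Fin n))]
  · simp [hM0, Matrix.trace, Matrix.diag]
  · intro σ _ hσ
    have : ∀ i : Fin n, (∏ j ∈ Finset.univ.erase i, M 0 (σ j) j) = 0 := by
      intro i
      obtain ⟨a, ha⟩ : ∃ a, σ a ≠ a := by
        by_contra hc
        push_neg at hc
        exact hσ (Equiv.ext hc)
      obtain ⟨j, hji, hj⟩ : ∃ j, j ≠ i ∧ σ j ≠ j := by
        rcases eq_or_ne a i with rfl | hai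
        · exact ⟨σ a, ha, fun hc => ha (σ.injective hc)⟩
        · exact ⟨a, hai, ha⟩
      refine Finset.prod_eq_zero (Finset.mem_erase.2 ⟨hji, Finset.mem_univ j⟩) ?_
      simp [hM0, Matrix.one_apply, hj]
    simp [this]
  · simp

lemma trace_smulRight_aux {n : ℕ} (f : EuclideanSpace ℝ (Fin n) →L[ℝ] ℝ)
    (v : EuclideanSpace ℝ (Fin n)) :
    LinearMap.trace ℝ (EuclideanSpace ℝ (Fin n)) (f.smulRight v).toLinearMap = f v := by
  have h1 : (f.smulRight v).toLinearMap
      = (LinearMap.toSpanSingleton ℝ (EuclideanSpace ℝ (Fin n)) v) ∘ₗ (f : _ →ₗ[ℝ] ℝ) := by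
    ext z; simp [LinearMap.toSpanSingleton_apply]
  rw [h1, LinearMap.trace_comp_comm']
  have h2 : ((f : _ →ₗ[ℝ] ℝ) ∘ₗ LinearMap.toSpanSingleton ℝ (EuclideanSpace ℝ (Fin n)) v)
      = (f v) • LinearMap.id := by
    ext
    simp [LinearMap.toSpanSingleton_apply, map_smul, smul_eq_mul, mul_comm]
  rw [h2, map_smul, LinearMap.trace_id, smul_eq_mul]
  simp

/-- The infinitesimal generator of the Perron–Frobenius semigroup
`[P_t ψ](x) = ψ(s(−t,x)) · det(D_x s(−t,x))` is `P_F ψ = −∇·(Fψ)`: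
if `y(t)` represents the backward flow `s(−t,x)` (so `y(0) = x`, `y'(0) = −F(x)`)
and `J(t)` represents the Jacobian `D_x s(−t,x)` (so `J(0) = id`, `J'(0) = −DF(x)`),
then `t ↦ ψ(y(t)) · det(J(t))` has derivative `−trace(D(ψ·F)(x))` at `t = 0`. -/
theorem perron_frobenius_generator
    (n : ℕ) (hn : 1 ≤ n)
    (x : EuclideanSpace ℝ (Fin n))
    (F : EuclideanSpace ℝ (Fin n) → EuclideanSpace ℝ (Fin n))
    (ψ : EuclideanSpace ℝ (Fin n) → ℝ)
    (hF : DifferentiableAt ℝ F x)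
    (hψ : DifferentiableAt ℝ ψ x)
    (y : ℝ → EuclideanSpace ℝ (Fin n))
    (hy0 : y 0 = x)
    (hy : HasDerivAt y (-F x) 0)
    (J : ℝ → (EuclideanSpace ℝ (Fin n) →L[ℝ] EuclideanSpace ℝ (Fin n)))
    (hJ0 : J 0 = ContinuousLinearMap.id ℝ (EuclideanSpace ℝ (Fin n)))
    (hJ : HasDerivAt J (-fderiv ℝ F x) 0) :
    HasDerivAt (fun t : ℝ => ψ (y t) * (J t).det)
      (-(LinearMap.trace ℝ (EuclideanSpace ℝ (Fin n))
          (fderiv ℝ (fun z => ψ z • F z) x).toLinearMap)) 0 := by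
  let b : Module.Basis (Fin n) ℝ (EuclideanSpace ℝ (Fin n)) := (EuclideanSpace.basisFun (Fin n) ℝ).toBasis
  -- entrywise evaluation as a continuous linear map
  have hDMentry : ∀ i j : Fin n,
      HasDerivAt (fun t => LinearMap.toMatrix b b ((J t) : EuclideanSpace ℝ (Fin n) →ₗ[ℝ] EuclideanSpace ℝ (Fin n)) i j)
        (LinearMap.toMatrix b b ((-fderiv ℝ F x : EuclideanSpace ℝ (Fin n) →L[ℝ] EuclideanSpace ℝ (Fin n)) : EuclideanSpace ℝ (Fin n) →ₗ[ℝ] EuclideanSpace ℝ (Fin n)) i j) 0 := by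
    intro i j
    let ℓ : (EuclideanSpace ℝ (Fin n) →L[ℝ] EuclideanSpace ℝ (Fin n)) →ₗ[ℝ] ℝ :=
      { toFun := fun T => LinearMap.toMatrix b b (T : EuclideanSpace ℝ (Fin n) →ₗ[ℝ] EuclideanSpace ℝ (Fin n)) i j
        map_add' := by intro T S; simp
        map_smul' := by intro c T; simp }
    have := (ℓ.toContinuousLinearMap.hasFDerivAt (x := J 0)).comp_hasDerivAt 0 hJ
    simp [ℓ, Function.comp] at this
    exact this
  have hM0 : (fun t => LinearMap.toMatrix b b ((J t) : EuclideanSpace ℝ (Fin n) →ₗ[ℝ] EuclideanSpace ℝ (Fin n))) 0 = 1 := by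
    simp [hJ0, LinearMap.toMatrix_id]
  have hdet : HasDerivAt (fun t => (LinearMap.toMatrix b b ((J t) : EuclideanSpace ℝ (Fin n) →ₗ[ℝ] EuclideanSpace ℝ (Fin n))).det)
      (LinearMap.toMatrix b b ((-fderiv ℝ F x : EuclideanSpace ℝ (Fin n) →L[ℝ] EuclideanSpace ℝ (Fin n)) : EuclideanSpace ℝ (Fin n) →ₗ[ℝ] EuclideanSpace ℝ (Fin n))).trace 0 :=
    det_path_hasDerivAt _ _ hM0 hDMentry
  have hdet' : HasDerivAt (fun t => (J t).det)
      (-(LinearMap.trace ℝ (EuclideanSpace ℝ (Fin n)) (fderiv ℝ F x).toLinearMap)) 0 := by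
    have h1 : (fun t => (LinearMap.toMatrix b b ((J t) : EuclideanSpace ℝ (Fin n) →ₗ[ℝ] EuclideanSpace ℝ (Fin n))).det)
        = fun t => (J t).det := by
      funext t
      rw [LinearMap.det_toMatrix]
    have h2 : (LinearMap.toMatrix b b ((-fderiv ℝ F x : EuclideanSpace ℝ (Fin n) →L[ℝ] EuclideanSpace ℝ (Fin n)) : EuclideanSpace ℝ (Fin n) →ₗ[ℝ] EuclideanSpace ℝ (Fin n))).trace
        = -(LinearMap.trace ℝ (EuclideanSpace ℝ (Fin n)) (fderiv ℝ F x).toLinearMap) := by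
      rw [← LinearMap.trace_eq_matrix_trace]
      simp
    rw [← h1, ← h2]
    exact hdet
  have hψy : HasDerivAt (fun t => ψ (y t)) (fderiv ℝ ψ x (-F x)) 0 := by
    have h := hψ.hasFDerivAt
    rw [← hy0] at h
    have h2 := h.comp_hasDerivAt 0 hy
    rw [hy0] at h2
    exact h2
  have hprod := hψy.mul hdet'
  have hdetJ0 : (J 0).det = 1 := by
    simp [hJ0, ContinuousLinearMap.det]
  -- compute fderiv of ψ • F
  have hsmul : HasFDerivAt (fun z => ψ z • F z)
      (ψ x • fderiv ℝ F x + (fderiv ℝ ψ x).smulRight (F x)) x :=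
    (hψ.hasFDerivAt).smul (hF.hasFDerivAt)
  have htr : LinearMap.trace ℝ (EuclideanSpace ℝ (Fin n)) (fderiv ℝ (fun z => ψ z • F z) x).toLinearMap
      = ψ x * LinearMap.trace ℝ (EuclideanSpace ℝ (Fin n)) (fderiv ℝ F x).toLinearMap + fderiv ℝ ψ x (F x) := by
    rw [hsmul.fderiv]
    have : ((ψ x • fderiv ℝ F x + (fderiv ℝ ψ x).smulRight (F x)) : EuclideanSpace ℝ (Fin n) →L[ℝ] EuclideanSpace ℝ (Fin n)).toLinearMap
        = ψ x • (fderiv ℝ F x).toLinearMap + ((fderiv ℝ ψ x).smulRight (F x)).toLinearMap := by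
      ext z; simp
    rw [this, map_add, map_smul, trace_smulRight_aux, smul_eq_mul]
  have hfinal : fderiv ℝ ψ x (-F x) * (J 0).det
      + ψ (y 0) * (-(LinearMap.trace ℝ (EuclideanSpace ℝ (Fin n)) (fderiv ℝ F x).toLinearMap))
      = -(LinearMap.trace ℝ (EuclideanSpace ℝ (Fin n)) (fderiv ℝ (fun z => ψ z • F z) x).toLinearMap) := by
    rw [hdetJ0, hy0, htr, map_neg]
    ring
  rw [← hfinal]
  exact hprod
end

section
/- Let n ≥ 1 and let s : ℝ × ℝⁿ → ℝⁿ be jointly measurable, such that for each t ≥ 0 the time-t map s(t,·) : ℝⁿ → ℝⁿ is a bijection whose inverse is s(−t,·) and s(−t,·) is differentiable everywhere. Let p, h₀ : ℝⁿ → [0,∞] be measurable, and assume the map (t,x) ↦ h₀(s(−t,x))·|det D_x s(−t,x)| is measurable on [0,∞) × ℝⁿ. Define the occupation density ρ(x) = ∫₀^∞ h₀(s(−t,x))·|det D_x s(−t,x)| dt. Then ∫₀^∞ ∫_{ℝⁿ} p(s(t,x))·h₀(x) dλ(x) dt = ∫_{ℝⁿ} p(x)·ρ(x) dλ(x), as an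 equality in [0,∞]. -/
open MeasureTheory ENNReal

/-- The collision probability equals the integral of `p` against the occupation
density: `∫₀^∞ ∫ p(s(t,x)) h₀(x) dλ(x) dt = ∫ p(x) ρ(x) dλ(x)`, where
`ρ(x) = ∫₀^∞ [P_t h₀](x) dt` and `[P_t h₀](x) = h₀(s(−t,x)) |det D_x s(−t,x)|`. -/
theorem collision_prob_eq_occupation_integral
    (n : ℕ) (hn : 1 ≤ n)
    (s : ℝ × EuclideanSpace ℝ (Fin n) → EuclideanSpace ℝ (Fin n))
    (hs : Measurable s)
    (hleft : ∀ t : ℝ, 0 ≤ t → ∀ x, s (-t, s (t, x)) = x)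
    (hright : ∀ t : ℝ, 0 ≤ t → ∀ y, s (t, s (-t, y)) = y)
    (hdiff : ∀ t : ℝ, 0 ≤ t → Differentiable ℝ (fun y => s (-t, y)))
    (p h₀ : EuclideanSpace ℝ (Fin n) → ℝ≥0∞)
    (hp : Measurable p) (hh₀ : Measurable h₀)
    (Pth : ℝ → EuclideanSpace ℝ (Fin n) → ℝ≥0∞)
    (hPth : ∀ t x, Pth t x
      = h₀ (s (-t, x)) * ENNReal.ofReal |(fderiv ℝ (fun z => s (-t, z)) x).det|)
    (hPth_meas : AEMeasurable (fun q : ℝ × EuclideanSpace ℝ (Fin n) => Pth q.1 q.2)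
      ((volume.restrict (Set.Ici (0 : ℝ))).prod volume))
    (ρ : EuclideanSpace ℝ (Fin n) → ℝ≥0∞)
    (hρ : ∀ x, ρ x = ∫⁻ t in Set.Ici (0 : ℝ), Pth t x) :
    ∫⁻ t in Set.Ici (0 : ℝ), ∫⁻ x, p (s (t, x)) * h₀ x
      = ∫⁻ x, p x * ρ x := by
  -- Step 1: for each t ≥ 0, change variables x = s(-t, y).
  have key : ∀ t : ℝ, 0 ≤ t →
      (∫⁻ x, p (s (t, x)) * h₀ x) = ∫⁻ y, p y * Pth t y := by
    intro t ht
    set f : EuclideanSpace ℝ (Fin n) → EuclideanSpace ℝ (Fin n) := fun y => s (-t, y)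
    have hfdiff : Differentiable ℝ f := hdiff t ht
    have hinj : Function.Injective f := by
      intro a b hab
      have := congrArg (fun z => s (t, z)) hab
      simpa [f, hright t ht] using this
    have hsurj : Function.Surjective f := fun x => ⟨s (t, x), hleft t ht x⟩
    have himg : f '' Set.univ = Set.univ := by
      rw [Set.image_univ]; exact hsurj.range_eq
    have hCV := lintegral_image_eq_lintegral_abs_det_fderiv_mul
      (volume : Measure (EuclideanSpace ℝ (Fin n))) MeasurableSet.univ
      (f' := fun y => fderiv ℝ f y)
      (fun y _ => (hfdiff y).hasFDerivAt.hasFDerivWithinAt)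
      (hinj.injOn) (fun x => p (s (t, x)) * h₀ x)
    rw [himg] at hCV
    simp only [Measure.restrict_univ] at hCV
    rw [hCV]
    refine lintegral_congr fun y => ?_
    have : s (t, f y) = y := hright t ht y
    rw [hPth t y]
    simp only [f] at this ⊢
    rw [this]
    ring
  -- Rewrite the outer integral using `key` (a.e. on Ici 0).
  have h1 : (∫⁻ t in Set.Ici (0 : ℝ), ∫⁻ x, p (s (t, x)) * h₀ x)
      = ∫⁻ t in Set.Ici (0 : ℝ), ∫⁻ y, p y * Pth t y := by
    refine lintegral_congr_ae ?_
    filter_upwards [ae_restrict_mem measurableSet_Ici] with t ht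
    exact key t ht
  rw [h1]
  -- Step 2: Tonelli swap.
  have hmeas : AEMeasurable (fun q : ℝ × EuclideanSpace ℝ (Fin n) => p q.2 * Pth q.1 q.2)
      ((volume.restrict (Set.Ici (0 : ℝ))).prod volume) :=
    (hp.comp measurable_snd).aemeasurable.mul hPth_meas
  have hswap := lintegral_lintegral_swap (f := fun t y => p y * Pth t y) hmeas
  rw [hswap]
  -- Step 3: pull `p y` out of the inner integral, a.e. in y.
  have hsec : AEMeasurable (fun z : EuclideanSpace ℝ (Fin n) × ℝ => Pth z.2 z.1)
      (volume.prod (volume.restrict (Set.Ici (0 : ℝ)))) := by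
    have := hPth_meas.prod_swap (f := fun q : ℝ × EuclideanSpace ℝ (Fin n) => Pth q.1 q.2)
    simpa using this
  refine lintegral_congr_ae ?_
  have hae : ∀ᵐ y ∂(volume : Measure (EuclideanSpace ℝ (Fin n))),
      ∀ᵐ t ∂(volume.restrict (Set.Ici (0 : ℝ))), Pth t y = hsec.mk _ (y, t) :=
    Measure.ae_ae_of_ae_prod hsec.ae_eq_mk
  filter_upwards [hae] with y hy
  have hsm : AEMeasurable (fun t => Pth t y) (volume.restrict (Set.Ici (0 : ℝ))) := by
    refine ⟨fun t => hsec.mk _ (y, t), hsec.measurable_mk.comp measurable_prodMk_left, hy⟩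
  rw [lintegral_const_mul'' (p y) hsm, hρ y]
end

section
/- Let n ≥ 1 and let s : ℝ × ℝⁿ → ℝⁿ be jointly measurable, such that for each t ≥ 0 the time-t map s(t,·) : ℝⁿ → ℝⁿ is a bijection whose inverse is s(−t,·) and s(−t,·) is differentiable everywhere. Let p, h₀ : ℝⁿ → [0,∞] be measurable, and assume the map (t,x) ↦ h₀(s(−t,x))·|det D_x s(−t,x)| is measurable on [0,∞) × ℝⁿ. Define ρ(x) = ∫₀^∞ h₀(s(−t,x))·|det D_x s(−t,x)| dt. If γ ∈ [0,∞] satisfies ∫_{ℝⁿ} p(x)·ρ(x) dλ(x) ≤ γ, then the probability of collision satisfies ∫₀^∞ ∫_{ℝⁿ} p(s(t,x))·h₀(x) dλ(x) dt ≤ γ; i.e., the navigation problem with probabilistic safety constraint level γ is verified by the occupation density ρ. -/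
open MeasureTheory ENNReal

/-- Convex verification of the probabilistic safety constraint: if the occupation
density `ρ(x) = ∫₀^∞ h₀(s(−t,x)) |det D_x s(−t,x)| dt` satisfies
`∫ p ρ dλ ≤ γ`, then the probability of collision satisfies
`∫₀^∞ ∫ p(s(t,x)) h₀(x) dλ(x) dt ≤ γ`. -/
theorem safety_verification
    (n : ℕ) (hn : 1 ≤ n)
    (s : ℝ × EuclideanSpace ℝ (Fin n) → EuclideanSpace ℝ (Fin n))
    (hs : Measurable s)
    (hleft : ∀ t : ℝ, 0 ≤ t → ∀ x, s (-t, s (t, x)) = x)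
    (hright : ∀ t : ℝ, 0 ≤ t → ∀ y, s (t, s (-t, y)) = y)
    (hdiff : ∀ t : ℝ, 0 ≤ t → Differentiable ℝ (fun y => s (-t, y)))
    (p h₀ : EuclideanSpace ℝ (Fin n) → ℝ≥0∞)
    (hp : Measurable p) (hh₀ : Measurable h₀)
    (Pth : ℝ → EuclideanSpace ℝ (Fin n) → ℝ≥0∞)
    (hPth : ∀ t x, Pth t x
      = h₀ (s (-t, x)) * ENNReal.ofReal |(fderiv ℝ (fun z => s (-t, z)) x).det|)
    (hPth_meas : AEMeasurable (fun q : ℝ × EuclideanSpace ℝ (Fin n) => Pth q.1 q.2)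
      ((volume.restrict (Set.Ici (0 : ℝ))).prod volume))
    (ρ : EuclideanSpace ℝ (Fin n) → ℝ≥0∞)
    (hρ : ∀ x, ρ x = ∫⁻ t in Set.Ici (0 : ℝ), Pth t x)
    (γ : ℝ≥0∞)
    (hγ : ∫⁻ x, p x * ρ x ≤ γ) :
    ∫⁻ t in Set.Ici (0 : ℝ), ∫⁻ x, p (s (t, x)) * h₀ x ≤ γ := by
  have key : ∀ t : ℝ, 0 ≤ t →
      (∫⁻ x, p (s (t, x)) * h₀ x) = ∫⁻ x, p x * Pth t x := by
    intro t ht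
    have hinj : Function.Injective (fun y => s (-t, y)) := by
      intro a b hab
      have := congrArg (fun z => s (t, z)) hab
      simpa [hright t ht] using this
    have hsurj : (fun y => s (-t, y)) '' Set.univ = Set.univ := by
      ext x
      simp only [Set.image_univ, Set.mem_range, Set.mem_univ, iff_true]
      exact ⟨s (t, x), hleft t ht x⟩
    have hderiv : ∀ x ∈ (Set.univ : Set (EuclideanSpace ℝ (Fin n))),
        HasFDerivWithinAt (fun y => s (-t, y)) (fderiv ℝ (fun z => s (-t, z)) x)
          Set.univ x :=
      fun x _ => ((hdiff t ht x).hasFDerivAt).hasFDerivWithinAt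
    have cov := lintegral_image_eq_lintegral_abs_det_fderiv_mul
      (volume : Measure (EuclideanSpace ℝ (Fin n))) MeasurableSet.univ hderiv
      (hinj.injOn) (fun x => p (s (t, x)) * h₀ x)
    rw [hsurj] at cov
    simp only [Measure.restrict_univ] at cov
    rw [cov]
    refine lintegral_congr fun x => ?_
    rw [hPth, hright t ht]
    ring
  calc ∫⁻ t in Set.Ici (0 : ℝ), ∫⁻ x, p (s (t, x)) * h₀ x
      = ∫⁻ t in Set.Ici (0 : ℝ), ∫⁻ x, p x * Pth t x := by
        refine setLIntegral_congr_fun measurableSet_Ici ?_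
        exact fun t ht => key t ht
    _ = ∫⁻ x, ∫⁻ t in Set.Ici (0 : ℝ), p x * Pth t x := by
        refine lintegral_lintegral_swap ?_
        exact (hp.comp measurable_snd).aemeasurable.mul hPth_meas
    _ = ∫⁻ x, p x * ρ x := by
        have hswap : AEMeasurable (fun q : EuclideanSpace ℝ (Fin n) × ℝ => Pth q.2 q.1)
            (volume.prod (volume.restrict (Set.Ici (0 : ℝ)))) := by
          exact hPth_meas.comp_quasiMeasurePreserving
            MeasureTheory.Measure.measurePreserving_swap.quasiMeasurePreserving
        obtain ⟨g, hgm, hfg⟩ := hswap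
        have hsec := MeasureTheory.Measure.ae_ae_of_ae_prod hfg
        refine lintegral_congr_ae ?_
        filter_upwards [hsec] with x hx
        have hxm : AEMeasurable (fun t => Pth t x)
            (volume.restrict (Set.Ici (0 : ℝ))) :=
          ⟨fun t => g (x, t), hgm.comp measurable_prodMk_left, hx⟩
        rw [hρ, lintegral_const_mul'' (p x) hxm]
    _ ≤ γ := hγ
end

section
/- Let n ≥ 1 and let s : ℝ × ℝⁿ → ℝⁿ be jointly measurable, such that for each t ≥ 0 the time-t map s(t,·) : ℝⁿ → ℝⁿ is a bijection whose inverse is s(−t,·) and s(−t,·) is differentiable everywhere. Let h₀ : ℝⁿ → [0,∞] be measurable, let μ₀ be the measure on ℝⁿ with density h₀ with respect to λ, and let X₁ ⊆ ℝⁿ be measurable. Assume (t,x) ↦ [P_t h₀](x) := h₀(s(−t,x))·|det D_x s(−t,x)| is measurable on [0,∞) × ℝⁿ and that the occupation density ρ(x) := ∫₀^∞ [P_t h₀](x) dt satisfies ∫_{X₁} ρ dλ < ∞. Then for every ε > 0 there exists T ≥ 0 such that for every measurable set B ⊆ X₁, ∫_T^∞ μ₀({x ∈ X₁ : s(t,x)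 ∈ B}) dt < ε; i.e., the system is almost-everywhere uniformly stable with respect to the initial measure μ₀. -/
open MeasureTheory ENNReal

/-- Finiteness of the occupation density over `X₁` implies almost-everywhere
uniform stability with respect to the initial measure `μ₀ = h₀ dλ`: for every
`ε > 0` there is `T ≥ 0` such that for every measurable `B ⊆ X₁`,
`∫_T^∞ μ₀({x ∈ X₁ : s(t,x) ∈ B}) dt < ε`. -/
theorem occupation_finite_implies_ae_uniform_stability
    (n : ℕ) (hn : 1 ≤ n)
    (s : ℝ × EuclideanSpace ℝ (Fin n) → EuclideanSpace ℝ (Fin n))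
    (hs : Measurable s)
    (hleft : ∀ t : ℝ, 0 ≤ t → ∀ x, s (-t, s (t, x)) = x)
    (hright : ∀ t : ℝ, 0 ≤ t → ∀ y, s (t, s (-t, y)) = y)
    (hdiff : ∀ t : ℝ, 0 ≤ t → Differentiable ℝ (fun y => s (-t, y)))
    (h₀ : EuclideanSpace ℝ (Fin n) → ℝ≥0∞)
    (hh₀ : Measurable h₀)
    (μ₀ : Measure (EuclideanSpace ℝ (Fin n)))
    (hμ₀ : μ₀ = volume.withDensity h₀)
    (X₁ : Set (EuclideanSpace ℝ (Fin n)))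
    (hX₁ : MeasurableSet X₁)
    (Pth : ℝ → EuclideanSpace ℝ (Fin n) → ℝ≥0∞)
    (hPth : ∀ t x, Pth t x
      = h₀ (s (-t, x)) * ENNReal.ofReal |(fderiv ℝ (fun z => s (-t, z)) x).det|)
    (hPth_meas : AEMeasurable (fun q : ℝ × EuclideanSpace ℝ (Fin n) => Pth q.1 q.2)
      ((volume.restrict (Set.Ici (0 : ℝ))).prod volume))
    (ρ : EuclideanSpace ℝ (Fin n) → ℝ≥0∞)
    (hρ : ∀ x, ρ x = ∫⁻ t in Set.Ici (0 : ℝ), Pth t x)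
    (hρ_fin : ∫⁻ x in X₁, ρ x < ⊤) :
    ∀ ε : ℝ≥0∞, 0 < ε → ∃ T : ℝ, 0 ≤ T ∧
      ∀ B : Set (EuclideanSpace ℝ (Fin n)), B ⊆ X₁ → MeasurableSet B →
        ∫⁻ t in Set.Ici T, μ₀ {x ∈ X₁ | s (t, x) ∈ B} < ε := by
  intro ε hε
  set φ : ℝ → ℝ≥0∞ := fun t => ∫⁻ x in X₁, Pth t x with hφ
  -- Key pointwise estimate via change of variables
  have key : ∀ t : ℝ, 0 ≤ t → ∀ B : Set (EuclideanSpace ℝ (Fin n)), B ⊆ X₁ →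
      MeasurableSet B → μ₀ {x ∈ X₁ | s (t, x) ∈ B} ≤ φ t := by
    intro t ht B hBX hB
    set f : EuclideanSpace ℝ (Fin n) → EuclideanSpace ℝ (Fin n) := fun y => s (-t, y) with hfdef
    have himg : f '' B = (fun x => s (t, x)) ⁻¹' B := by
      ext x
      constructor
      · rintro ⟨y, hy, rfl⟩
        simpa [Set.mem_preimage, hfdef, hright t ht y] using hy
      · intro hx
        exact ⟨s (t, x), hx, hleft t ht x⟩
    have hpre_meas : MeasurableSet ((fun x => s (t, x)) ⁻¹' B) :=
      hB.preimage (hs.comp (measurable_const.prodMk measurable_id))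
    have hinj : Set.InjOn f B := by
      intro y hy y' hy' hyy'
      have := congrArg (fun z => s (t, z)) hyy'
      simpa [hfdef, hright t ht y, hright t ht y'] using this
    have hderiv : ∀ x ∈ B, HasFDerivWithinAt f (fderiv ℝ f x) B x :=
      fun x _ => ((hdiff t ht x).hasFDerivAt).hasFDerivWithinAt
    have hcov : μ₀ (f '' B) = ∫⁻ x in B, Pth t x := by
      rw [hμ₀, himg, withDensity_apply _ hpre_meas, ← himg,
        lintegral_image_eq_lintegral_abs_det_fderiv_mul volume hB hderiv hinj h₀]
      refine lintegral_congr fun x => ?_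
      rw [hPth t x, mul_comm]
    calc μ₀ {x ∈ X₁ | s (t, x) ∈ B}
        ≤ μ₀ ((fun x => s (t, x)) ⁻¹' B) := measure_mono fun x hx => hx.2
      _ = ∫⁻ x in B, Pth t x := by rw [← himg, hcov]
      _ ≤ φ t := lintegral_mono' (Measure.restrict_mono hBX le_rfl) le_rfl
  -- Tonelli: total time integral of φ equals ∫ ρ over X₁
  have hmeas2 : AEMeasurable (fun q : ℝ × EuclideanSpace ℝ (Fin n) => Pth q.1 q.2)
      ((volume.restrict (Set.Ici (0 : ℝ))).prod (volume.restrict X₁)) := by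
    have : (volume.restrict (Set.Ici (0 : ℝ))).prod (volume.restrict X₁)
        = ((volume.restrict (Set.Ici (0 : ℝ))).prod volume).restrict (Set.univ ×ˢ X₁) := by
      rw [← Measure.prod_restrict, Measure.restrict_univ]
    rw [this]
    exact hPth_meas.restrict
  have htonelli : ∫⁻ t in Set.Ici (0 : ℝ), φ t = ∫⁻ x in X₁, ρ x := by
    calc ∫⁻ t in Set.Ici (0 : ℝ), φ t
        = ∫⁻ x in X₁, ∫⁻ t in Set.Ici (0 : ℝ), Pth t x := lintegral_lintegral_swap hmeas2
      _ = ∫⁻ x in X₁, ρ x := by simp_rw [hρ]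
  -- the measure with density φ on [0,∞)
  set ν : Measure ℝ := (volume.restrict (Set.Ici (0 : ℝ))).withDensity φ with hν
  have hν_apply : ∀ T : ℝ, 0 ≤ T → ν (Set.Ici T) = ∫⁻ t in Set.Ici T, φ t := by
    intro T hT
    rw [hν, withDensity_apply _ measurableSet_Ici, Measure.restrict_restrict measurableSet_Ici,
      Set.inter_eq_self_of_subset_left (Set.Ici_subset_Ici.mpr hT)]
  have hν_fin : ν (Set.Ici (0 : ℝ)) ≠ ⊤ := by
    rw [hν_apply 0 le_rfl, htonelli]; exact hρ_fin.ne
  -- continuity from above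
  have hiInter : ⋂ N : ℕ, Set.Ici ((N : ℕ) : ℝ) = ∅ := by
    ext x
    simp only [Set.mem_iInter, Set.mem_Ici, Set.mem_empty_iff_false, iff_false, not_forall,
      not_le]
    obtain ⟨N, hN⟩ := exists_nat_gt x
    exact ⟨N, hN⟩
  have htend : Filter.Tendsto (fun N : ℕ => ν (Set.Ici ((N : ℕ) : ℝ))) Filter.atTop (nhds 0) := by
    have := tendsto_measure_iInter_atTop (μ := ν) (s := fun N : ℕ => Set.Ici ((N : ℕ) : ℝ))
      (fun N => measurableSet_Ici.nullMeasurableSet)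
      (fun i j hij => Set.Ici_subset_Ici.mpr (by exact_mod_cast hij))
      ⟨0, by simpa using hν_fin⟩
    simpa [hiInter, Function.comp_def] using this
  have hev : ∀ᶠ N : ℕ in Filter.atTop, ν (Set.Ici ((N : ℕ) : ℝ)) < ε :=
    htend.eventually_lt_const hε
  obtain ⟨N, hN⟩ := hev.exists
  refine ⟨(N : ℝ), Nat.cast_nonneg N, fun B hBX hB => ?_⟩
  have hbound : ∫⁻ t in Set.Ici ((N : ℕ) : ℝ), μ₀ {x ∈ X₁ | s (t, x) ∈ B}
      ≤ ∫⁻ t in Set.Ici ((N : ℕ) : ℝ), φ t :=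
    lintegral_mono_ae ((ae_restrict_iff' measurableSet_Ici).2 (Filter.Eventually.of_forall
      fun t ht => key t (le_trans (Nat.cast_nonneg N) ht) B hBX hB))
  calc ∫⁻ t in Set.Ici ((N : ℕ) : ℝ), μ₀ {x ∈ X₁ | s (t, x) ∈ B}
      ≤ ∫⁻ t in Set.Ici ((N : ℕ) : ℝ), φ t := hbound
    _ = ν (Set.Ici ((N : ℕ) : ℝ)) := (hν_apply _ (Nat.cast_nonneg N)).symm
    _ < ε := hN
end

section
/- Let n ≥ 1, let f, g : ℝⁿ → ℝⁿ, let ρ, ρ̄ : ℝⁿ → ℝ with ρ and ρ̄ differentiable everywhere and f, g differentiable everywhere, let h₀ : ℝⁿ → ℝ, and let M ≥ 0. Assume ρ(x) ≥ 0 and |ρ̄(x)| ≤ M·ρ(x) for every x, and assume the linear density constraint ∇·(ρ f + ρ̄ g)(x) = h₀(x) holds for every x, where ∇·G(x) := trace(DG(x)) for a differentiable vector field G. Define the feedback control k : ℝⁿ → ℝ by k(x) = ρ̄(x)/ρ(x) if ρ(x) ≠ 0 and k(x) = 0 otherwise. Then: (i) |k(x)| ≤ M for every x, so the control constraint |u|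 ≤ M is satisfied; and (ii) ρ(x)·(f(x) + k(x)·g(x)) = ρ(x)·f(x) + ρ̄(x)·g(x) for every x, and consequently the closed-loop vector field F := f + k·g satisfies ∇·(ρ F)(x) = h₀(x) for every x. -/
open MeasureTheory

/-- Convex change of variables `(ρ, k) → (ρ, ρ̄ = kρ)` for control synthesis:
if `ρ ≥ 0`, `|ρ̄| ≤ M ρ`, and `∇·(ρ f + ρ̄ g) = h₀`, then the feedback control
`k = ρ̄/ρ` (set to `0` where `ρ = 0`) satisfies `|k| ≤ M`, the identity
`ρ (f + k g) = ρ f + ρ̄ g`, and the closed-loop vector field `F = f + k g`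
satisfies `∇·(ρ F) = h₀`. -/
theorem control_synthesis_change_of_variables
    (n : ℕ) (hn : 1 ≤ n)
    (f g : EuclideanSpace ℝ (Fin n) → EuclideanSpace ℝ (Fin n))
    (hf : Differentiable ℝ f) (hg : Differentiable ℝ g)
    (ρ ρb : EuclideanSpace ℝ (Fin n) → ℝ)
    (hρdiff : Differentiable ℝ ρ) (hρbdiff : Differentiable ℝ ρb)
    (h₀ : EuclideanSpace ℝ (Fin n) → ℝ)
    (M : ℝ) (hM : 0 ≤ M)
    (hρpos : ∀ x, 0 ≤ ρ x)
    (hbound : ∀ x, |ρb x| ≤ M * ρ x)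
    (hdiv : ∀ x, LinearMap.trace ℝ (EuclideanSpace ℝ (Fin n))
        (fderiv ℝ (fun z => ρ z • f z + ρb z • g z) x).toLinearMap = h₀ x)
    (k : EuclideanSpace ℝ (Fin n) → ℝ)
    (hk : ∀ x, k x = if ρ x ≠ 0 then ρb x / ρ x else 0) :
    (∀ x, |k x| ≤ M)
    ∧ (∀ x, ρ x • (f x + k x • g x) = ρ x • f x + ρb x • g x)
    ∧ (∀ x, LinearMap.trace ℝ (EuclideanSpace ℝ (Fin n))
        (fderiv ℝ (fun z => ρ z • (f z + k z • g z)) x).toLinearMap = h₀ x) := by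
  have hzero : ∀ x, ρ x = 0 → ρb x = 0 := by
    intro x hx
    have := hbound x
    rw [hx, mul_zero] at this
    exact abs_eq_zero.mp (le_antisymm this (abs_nonneg _))
  have hkey : ∀ x, ρ x * k x = ρb x := by
    intro x
    rw [hk x]
    by_cases h : ρ x = 0
    · simp [h, hzero x h]
    · rw [if_pos h]; field_simp [h]
  have h2 : ∀ x, ρ x • (f x + k x • g x) = ρ x • f x + ρb x • g x := by
    intro x
    rw [smul_add, smul_smul, hkey x]
  refine ⟨?_, h2, ?_⟩
  · intro x
    rw [hk x]
    by_cases h : ρ x = 0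
    · simp [h, hM]
    · rw [if_pos h, abs_div, abs_of_nonneg (hρpos x), div_le_iff₀ (lt_of_le_of_ne (hρpos x) (Ne.symm h))]
      calc |ρb x| ≤ M * ρ x := hbound x
        _ = M * ρ x := rfl
  · intro x
    have : (fun z => ρ z • (f z + k z • g z)) = fun z => ρ z • f z + ρb z • g z :=
      funext h2
    rw [this]
    exact hdiv x
end
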